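/- Safe-boolean-role reduction: there exists an ALCb(V)-k-bisimulation between (I,d) and (J,e) containing ([d],[e]) if and only if there exists an ALC(V^b)-k-bisimulation between the b-enrichments (I_b, d) and (J_b, e) containing ([d],[e]). -/
import Mathlib


/-- An interpretation over concept names `C` and role names `R` with domain `D`:
it maps concept names to subsets of the domain and role names to binary relations. -/
structure Interp (C R D : Type) where
  concept : C → Set D
  role : R → Set (D × D)

variable {C R DI DJ DK : Type}

/-- `Z` is a `k`-bisimulation between `I` and `J`: a set of pairs of nonempty sequences
of equal length at most `k+1` satisfying concept-name harmony between last elements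
and the role back-and-forth conditions (restricted to the length bound). -/
def IsKBisim (k : ℕ) (I : Interp C R DI) (J : Interp C R DJ)
    (Z : List DI → List DJ → Prop) : Prop :=
  (∀ s s', Z s s' → s ≠ [] ∧ s.length = s'.length ∧ s.length ≤ k + 1) ∧
  (∀ s s' d e, Z (s ++ [d]) (s' ++ [e]) → ∀ c, d ∈ I.concept c ↔ e ∈ J.concept c) ∧
  (∀ s s' d e, Z (s ++ [d]) (s' ++ [e]) → s.length + 2 ≤ k + 1 →
    ∀ r d', (d, d') ∈ I.role r →
      ∃ e', (e, e') ∈ J.role r ∧ Z (s ++ [d, d']) (s' ++ [e, e'])) ∧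
  (∀ s s' d e, Z (s ++ [d]) (s' ++ [e]) → s.length + 2 ≤ k + 1 →
    ∀ r e', (e, e') ∈ J.role r →
      ∃ d', (d, d') ∈ I.role r ∧ Z (s ++ [d, d']) (s' ++ [e, e']))

/-- The b-enrichment `I_b`: role names are the nonempty subsets `S` of the original
role names, with `r_S` interpreted as the pairs whose exact 2-type is `S`. -/
def bEnrich (I : Interp C R DI) : Interp C {S : Set R // S.Nonempty} DI where
  concept := I.concept
  role S := {p | S.1 = {r : R | p ∈ I.role r}}

/-- The extra condition of an `ALCb`-`k`-bisimulation: witnesses must preserve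
the exact set of roles connecting the two elements. -/
def BCond (k : ℕ) (I : Interp C R DI) (J : Interp C R DJ)
    (Z : List DI → List DJ → Prop) : Prop :=
  (∀ s s' d e, Z (s ++ [d]) (s' ++ [e]) → s.length + 2 ≤ k + 1 →
    ∀ r d', (d, d') ∈ I.role r →
      ∃ e', {r' : R | (d, d') ∈ I.role r'} = {r' : R | (e, e') ∈ J.role r'} ∧
        Z (s ++ [d, d']) (s' ++ [e, e'])) ∧
  (∀ s s' d e, Z (s ++ [d]) (s' ++ [e]) → s.length + 2 ≤ k + 1 →
    ∀ r e', (e, e') ∈ J.role r →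
      ∃ d', {r' : R | (d, d') ∈ I.role r'} = {r' : R | (e, e') ∈ J.role r'} ∧
        Z (s ++ [d, d']) (s' ++ [e, e']))

/-- there is an `ALCb(V)`-`k`-bisimulation between `(I,d)` and `(J,e)`
containing `([d],[e])` iff there is an `ALC(V^b)`-`k`-bisimulation between the
b-enrichments containing `([d],[e])`. -/
theorem bEnrich_reduction (k : ℕ)
    (I : Interp C R DI) (J : Interp C R DJ) (d : DI) (e : DJ) :
    (∃ Z : List DI → List DJ → Prop,
       (IsKBisim k I J Z ∧ BCond k I J Z) ∧ Z [d] [e]) ↔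
    (∃ Z : List DI → List DJ → Prop,
       IsKBisim k (bEnrich I) (bEnrich J) Z ∧ Z [d] [e]) := by
  constructor
  · rintro ⟨Z, ⟨⟨h1, h2, _, _⟩, b3, b4⟩, hZ⟩
    refine ⟨Z, ⟨h1, h2, ?_, ?_⟩, hZ⟩
    · intro s s' a b hz hlen S a' ha
      have ha' : S.1 = {r : R | (a, a') ∈ I.role r} := ha
      obtain ⟨r, hr⟩ := S.2
      have hra : (a, a') ∈ I.role r := by rw [ha'] at hr; exact hr
      obtain ⟨b', hset, hz'⟩ := b3 s s' a b hz hlen r a' hra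
      exact ⟨b', show S.1 = _ by rw [ha', hset], hz'⟩
    · intro s s' a b hz hlen S b' hb
      have hb' : S.1 = {r : R | (b, b') ∈ J.role r} := hb
      obtain ⟨r, hr⟩ := S.2
      have hrb : (b, b') ∈ J.role r := by rw [hb'] at hr; exact hr
      obtain ⟨a', hset, hz'⟩ := b4 s s' a b hz hlen r b' hrb
      exact ⟨a', show S.1 = _ by rw [hb', ← hset], hz'⟩
  · rintro ⟨Z, ⟨h1, h2, h3, h4⟩, hZ⟩
    have forth : ∀ s s' a b, Z (s ++ [a]) (s' ++ [b]) → s.length + 2 ≤ k + 1 →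
        ∀ r a', (a, a') ∈ I.role r →
          ∃ b', {r' : R | (a, a') ∈ I.role r'} = {r' : R | (b, b') ∈ J.role r'} ∧
            Z (s ++ [a, a']) (s' ++ [b, b']) := by
      intro s s' a b hz hlen r a' ha
      obtain ⟨b', hb, hz'⟩ := h3 s s' a b hz hlen ⟨{r' | (a, a') ∈ I.role r'}, ⟨r, ha⟩⟩ a' rfl
      exact ⟨b', hb, hz'⟩
    have back : ∀ s s' a b, Z (s ++ [a]) (s' ++ [b]) → s.length + 2 ≤ k + 1 →
        ∀ r b', (b, b') ∈ J.role r →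
          ∃ a', {r' : R | (a, a') ∈ I.role r'} = {r' : R | (b, b') ∈ J.role r'} ∧
            Z (s ++ [a, a']) (s' ++ [b, b']) := by
      intro s s' a b hz hlen r b' hb
      obtain ⟨a', ha, hz'⟩ := h4 s s' a b hz hlen ⟨{r' | (b, b') ∈ J.role r'}, ⟨r, hb⟩⟩ b' rfl
      exact ⟨a', (Eq.symm ha : _), hz'⟩
    refine ⟨Z, ⟨⟨h1, h2, ?_, ?_⟩, forth, back⟩, hZ⟩
    · intro s s' a b hz hlen r a' ha
      obtain ⟨b', hset, hz'⟩ := forth s s' a b hz hlen r a' ha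
      exact ⟨b', by have : r ∈ {r' | (a, a') ∈ I.role r'} := ha; rwa [hset] at this, hz'⟩
    · intro s s' a b hz hlen r b' hb
      obtain ⟨a', hset, hz'⟩ := back s s' a b hz hlen r b' hb
      exact ⟨a', by have : r ∈ {r' | (b, b') ∈ J.role r'} := hb; rwa [← hset] at this, hz'⟩
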